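/- arXiv:2407.05237 — 2 statements merged into one kernel-verified Lean document; each statement's English description precedes it below -/
import Mathlib

section
/- Nonnegativity and vanishing of the residual sequence (Lemma A.2(b)). Let L > 1 be real and T ≥ 1 an integer. Define S_T = Σ_{i=0}^{T−1} L^{2i}, b_t = (L^{T−t}/S_T)·L^{T−1} for t ∈ [T], and R_t = L^{t−1} − Σ_{i=1}^{t} b_i L^{t−i}. Then R_t ≥ 0 for every t ∈ [T], and R_T = 0. -/
open MeasureTheory ProbabilityTheory Finset
open scoped ENNReal NNReal RealInnerProductSpace Classical

noncomputable section

/-- `E n` is the Euclidean space `ℝⁿ`. -/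
abbrev En (n : ℕ) := EuclideanSpace ℝ (Fin n)

/-- The Rényi divergence of order `α` between two measures. -/
def renyiDiv {n : ℕ} (α : ℝ) (μ ν : Measure (En n)) : EReal :=
  if μ ≪ ν then ((α - 1)⁻¹ : ℝ) * ENNReal.log (∫⁻ x, μ.rnDeriv ν x ^ α ∂ν)
  else ⊤

/-- `π` is a coupling of `μ` and `ν`. -/
def IsCoupling {n : ℕ} (π : Measure (En n × En n)) (μ ν : Measure (En n)) : Prop :=
  π.map Prod.fst = μ ∧ π.map Prod.snd = ν

/-- The `∞`-Wasserstein distance between `μ` and `ν` is at most `τ`, i.e. there is a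
coupling under which the two coordinates are a.s. within distance `τ`. -/
def WInfLE {n : ℕ} (μ ν : Measure (En n)) (τ : ℝ) : Prop :=
  ∃ π : Measure (En n × En n), IsProbabilityMeasure π ∧ IsCoupling π μ ν ∧
    ∀ᵐ p ∂π, ‖p.1 - p.2‖ ≤ τ

/-- The shifted Rényi divergence `D_α^{(τ)}(μ‖ν)`. -/
def shiftedRenyiDiv {n : ℕ} (α τ : ℝ) (μ ν : Measure (En n)) : EReal :=
  sInf ((fun γ => renyiDiv α γ ν) '' {γ : Measure (En n) | IsProbabilityMeasure γ ∧ WInfLE μ γ τ})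

/-- The centered Gaussian measure `N(0, σ²I)` on `ℝⁿ`. -/
def gaussianE (n : ℕ) (σ : ℝ) : Measure (En n) :=
  Measure.map (MeasurableEquiv.toLp 2 (Fin n → ℝ))
    (Measure.pi fun _ : Fin n => gaussianReal 0 ⟨σ ^ 2, sq_nonneg σ⟩)

/-- `x` is the proximal point of `ψ` at `z`, i.e. `x = prox_ψ(z)`. -/
def IsProxPt {n : ℕ} (ψ : En n → EReal) (z x : En n) : Prop :=
  ∀ y, ψ x + ((‖x - z‖ ^ 2 / 2 : ℝ) : EReal) ≤ ψ y + ((‖y - z‖ ^ 2 / 2 : ℝ) : EReal)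

/-- `ψ` is a proper lower-semicontinuous convex (extended-real-valued) function. -/
def ProperLscConvex {n : ℕ} (ψ : En n → EReal) : Prop :=
  LowerSemicontinuous ψ ∧
  (∀ x y : En n, ∀ a b : ℝ, 0 ≤ a → 0 ≤ b → a + b = 1 →
    ψ (a • x + b • y) ≤ (a : EReal) * ψ x + (b : EReal) * ψ y) ∧
  (∃ x, ψ x ≠ ⊤) ∧ (∀ x, ψ x ≠ ⊥)

/-- The (effective) domain of an extended-real-valued function. -/
def edom {n : ℕ} (ψ : En n → EReal) : Set (En n) := {x | ψ x ≠ ⊤}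

/-- The quantity `θ_L(s)`. -/
def theta (L : ℝ) (s : ℕ) : ℝ :=
  if s = 0 then 0 else L ^ (2 * (s - 1)) / ∑ j ∈ Finset.range s, L ^ (2 * j)

/-- Euclidean projection onto the closed ball of radius `C` centered at the origin. -/
def clipC {n : ℕ} (C : ℝ) (x : En n) : En n :=
  if ‖x‖ ≤ C then x else (C / ‖x‖) • x

/-- Assumption (A2) for a single function `f` relative to the domain `D`. -/
def A2 {n : ℕ} (D : Set (En n)) (f : En n → ℝ) (m M : ℝ) : Prop :=
  (∃ U, IsOpen U ∧ D ⊆ U ∧ ∀ x ∈ U, DifferentiableAt ℝ f x) ∧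
  ∀ x ∈ D, ∀ y ∈ D,
    -(m / 2) * ‖x - y‖ ^ 2 ≤ f x - f y - ⟪gradient f y, x - y⟫ ∧
    f x - f y - ⟪gradient f y, x - y⟫ ≤ M / 2 * ‖x - y‖ ^ 2

/-- The constant `L_λ = sqrt(1 + 2λm(1 + m/(M+m)))`. -/
def Llam (lam m M : ℝ) : ℝ := Real.sqrt (1 + 2 * lam * m * (1 + m / (M + m)))

/-- The batch `B_t` of indices (0-indexed) used at iteration `t` of cyclically-sampled DP-SGD. -/
def batchIdx (k b t : ℕ) : Finset ℕ := Finset.Ico (b * (t - 1) % k) (b * (t - 1) % k + b)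

/-- One (pre-noise, pre-prox) DP-SGD displacement `x ↦ x - λ g_t(x)` with clipped gradients. -/
def sgdStep {n : ℕ} (k b : ℕ) (C lam : ℝ) (f : ℕ → En n → ℝ) (t : ℕ) (x : En n) : En n :=
  x - lam • ((b : ℝ)⁻¹ • ∑ i ∈ batchIdx k b t, clipC C (gradient (f i) x))

/-- The process `X` consists of DP-SGD iterates for losses `f`, regularizer `h`,
noise `N`, and initial point `x0`. -/
def DPSGDIterates {n : ℕ} {Ω : Type} [MeasurableSpace Ω]
    (h : En n → EReal) (f : ℕ → En n → ℝ) (k b : ℕ) (C lam : ℝ)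
    (N : ℕ → Ω → En n) (x0 : En n) (X : ℕ → Ω → En n) : Prop :=
  (∀ t, Measurable (X t)) ∧ (∀ ω, X 0 ω = x0) ∧
  ∀ t : ℕ, 1 ≤ t → ∀ ω,
    IsProxPt (fun z => (lam : EReal) * h z) (sgdStep k b C lam f t (X (t - 1) ω) + N t ω) (X t ω)

/-- The noise sequence `N` is an i.i.d. sequence of `N(0,σ²I)` Gaussians. -/
def GaussianNoise {n : ℕ} {Ω : Type} [MeasurableSpace Ω] (P : Measure Ω) (σ : ℝ)
    (N : ℕ → Ω → En n) : Prop :=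
  (∀ t, Measurable (N t)) ∧ iIndepFun N P ∧
  ∀ t, P.map (N t) = gaussianE n σ

/-- Each `f i`, `i < k`, is differentiable on an open set containing `D`. -/
def DiffOnOpen {n : ℕ} (D : Set (En n)) (f : ℕ → En n → ℝ) (k : ℕ) : Prop :=
  ∀ i < k, ∃ U, IsOpen U ∧ D ⊆ U ∧ ∀ x ∈ U, DifferentiableAt ℝ (f i) x

/-- Condition (★) with parameters `(L, ζ, s)` for the maps `φ, φ'` on the common domain `D`. -/
def StarCond {n : ℕ} (D : Set (En n)) (φ φ' : En n → En n) (L ζ s : ℝ) : Prop :=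
  (∀ u ∈ D, ‖φ' u - φ u‖ ≤ s) ∧
  (∀ x ∈ D, ∀ y ∈ D, ‖φ x - φ y‖ ≤ L * ‖x - y‖ + ζ) ∧
  (∀ x ∈ D, ∀ y ∈ D, ‖φ' x - φ' y‖ ≤ L * ‖x - y‖ + ζ)
/-- Lemma A.2(b): nonnegativity and vanishing of the residual sequence. -/
theorem residuals_nonneg_and_vanish (L : ℝ) (hL : 1 < L) (T : ℕ) (hT : 1 ≤ T)
    (S : ℝ) (hS : S = ∑ i ∈ Finset.range T, L ^ (2 * i))
    (bseq : ℕ → ℝ) (hb : ∀ t, bseq t = L ^ (T - t) / S * L ^ (T - 1))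
    (R : ℕ → ℝ)
    (hR : ∀ t, R t = L ^ (t - 1) - ∑ i ∈ Finset.Icc 1 t, bseq i * L ^ (t - i)) :
    (∀ t ∈ Finset.Icc 1 T, 0 ≤ R t) ∧ R T = 0 := by

  have hL0 : 0 < L := lt_trans one_pos hL
  have hS0 : 0 < S := by
    rw [hS]
    exact Finset.sum_pos (fun i _ => pow_pos hL0 _)
      (Finset.nonempty_range_iff.mpr (by omega))
  have key : ∀ t, 1 ≤ t → t ≤ T →
      ∑ i ∈ Finset.Icc 1 t, bseq i * L ^ (t - i)
        = (L ^ (T - 1) / S) * (L ^ (T - t) * ∑ i ∈ Finset.range t, L ^ (2 * i)) := by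
    intro t ht1 htT
    rw [← Finset.Ico_add_one_right_eq_Icc, Finset.sum_Ico_eq_sum_range]
    have h1 : t + 1 - 1 = t := by omega
    rw [h1, ← Finset.sum_range_reflect, Finset.mul_sum, Finset.mul_sum]
    refine Finset.sum_congr rfl ?_
    intro i hi
    simp only [Finset.mem_range] at hi
    rw [hb]
    have e1 : 1 + (t - 1 - i) = t - i := by omega
    have e2 : T - (t - i) = (T - t) + i := by omega
    have e3 : t - (t - i) = i := by omega
    have e4 : 2 * i = i + i := by omega
    rw [e1, e2, e3, e4, pow_add, pow_add]
    ring
  have key2 : ∀ t, 1 ≤ t → t ≤ T →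
      L ^ (T - 1) * (L ^ (T - t) * ∑ i ∈ Finset.range t, L ^ (2 * i)) ≤ L ^ (t - 1) * S := by
    intro t ht1 htT
    have hTt : T - (T - t) = t := by omega
    calc L ^ (T - 1) * (L ^ (T - t) * ∑ i ∈ Finset.range t, L ^ (2 * i))
        = ∑ i ∈ Finset.range t, L ^ (t - 1) * L ^ (2 * ((T - t) + i)) := by
          rw [Finset.mul_sum, Finset.mul_sum]
          refine Finset.sum_congr rfl ?_
          intro i hi
          simp only [Finset.mem_range] at hi
          rw [← pow_add, ← pow_add, ← pow_add]
          congr 1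
          omega
      _ = ∑ j ∈ Finset.Ico (T - t) T, L ^ (t - 1) * L ^ (2 * j) := by
          rw [Finset.sum_Ico_eq_sum_range, hTt]
      _ ≤ ∑ j ∈ Finset.range T, L ^ (t - 1) * L ^ (2 * j) := by
          refine Finset.sum_le_sum_of_subset_of_nonneg ?_ (fun _ _ _ => by positivity)
          intro x hx
          simp only [Finset.mem_Ico, Finset.mem_range] at *
          omega
      _ = L ^ (t - 1) * S := by rw [hS, Finset.mul_sum]
  constructor
  · intro t ht
    simp only [Finset.mem_Icc] at ht
    rw [hR, key t ht.1 ht.2]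
    rw [sub_nonneg, div_mul_eq_mul_div, div_le_iff₀ hS0]
    exact key2 t ht.1 ht.2
  · rw [hR, key T hT le_rfl, Nat.sub_self, pow_zero, one_mul, ← hS,
      div_mul_cancel₀ _ (ne_of_gt hS0), sub_self]
end
end

section
/- Optimality of the chosen residuals (Appendix B). Let L > 1 be real, T ≥ 1 an integer, and c ≥ 0. For nonnegative reals a_1,…,a_T, define R̃_t = c·L^{t−1} − Σ_{i=1}^{t} a_i L^{t−i}. If R̃_t ≥ 0 for all t ∈ [T−1] and R̃_T = 0, then Σ_{t=1}^{T} a_t² ≥ c² θ_L(T); moreover, equality holds for the choice a_t = c·L^{T−1}·L^{T−t} / (Σ_{i=0}^{T−1} L^{2i}), which satisfies the constraints. In particular, this choice of a_1,…,a_T minimizes Σ_{t=1}^T a_t² subject to the constraints. -/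
open MeasureTheory ProbabilityTheory Finset
open scoped ENNReal NNReal RealInnerProductSpace Classical

noncomputable section

lemma aux_sum (L : ℝ) {T t : ℕ} (ht1 : 1 ≤ t) (ht2 : t ≤ T) :
    ∑ i ∈ Finset.Icc 1 t, L ^ (T - i) * L ^ (t - i)
      = L ^ (T - t) * ∑ j ∈ Finset.range t, L ^ (2 * j) := by
  rw [Finset.mul_sum, ← Finset.Ico_add_one_right_eq_Icc, Finset.sum_Ico_eq_sum_range]
  simp only [Nat.add_sub_cancel_left, Nat.add_sub_cancel, Nat.succ_sub_one]
  conv_rhs => rw [← Finset.sum_range_reflect]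
  apply Finset.sum_congr rfl
  intro j hj
  rw [Finset.mem_range] at hj
  rw [← pow_add, ← pow_add]
  congr 1
  omega

lemma aux_le (L : ℝ) (hL0 : 0 ≤ L) {T t : ℕ} (ht2 : t ≤ T) :
    ∑ j ∈ Finset.range t, L ^ (2 * (T - t + j)) ≤ ∑ j ∈ Finset.range T, L ^ (2 * j) := by
  have h1 : ∑ j ∈ Finset.range t, L ^ (2 * (T - t + j))
      = ∑ j ∈ Finset.Ico (T - t) T, L ^ (2 * j) := by
    rw [Finset.sum_Ico_eq_sum_range, Nat.sub_sub_self ht2]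
  rw [h1, ← Nat.Ico_zero_eq_range]
  apply Finset.sum_le_sum_of_subset_of_nonneg
  · exact Finset.Ico_subset_Ico (Nat.zero_le _) le_rfl
  · intro i _ _; positivity

/-- Appendix B: optimality of the chosen residuals. -/
theorem residuals_optimal (L : ℝ) (hL : 1 < L) (T : ℕ) (hT : 1 ≤ T) (c : ℝ) (hc : 0 ≤ c) :
    (∀ a : ℕ → ℝ, (∀ t ∈ Finset.Icc 1 T, 0 ≤ a t) →
      (∀ t ∈ Finset.Icc 1 (T - 1),
        0 ≤ c * L ^ (t - 1) - ∑ i ∈ Finset.Icc 1 t, a i * L ^ (t - i)) →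
      c * L ^ (T - 1) - ∑ i ∈ Finset.Icc 1 T, a i * L ^ (T - i) = 0 →
      c ^ 2 * theta L T ≤ ∑ t ∈ Finset.Icc 1 T, a t ^ 2) ∧
    (∀ astar : ℕ → ℝ,
      (∀ t, astar t = c * L ^ (T - 1) * L ^ (T - t) / ∑ i ∈ Finset.range T, L ^ (2 * i)) →
      (∀ t ∈ Finset.Icc 1 T, 0 ≤ astar t) ∧
      (∀ t ∈ Finset.Icc 1 (T - 1),
        0 ≤ c * L ^ (t - 1) - ∑ i ∈ Finset.Icc 1 t, astar i * L ^ (t - i)) ∧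
      c * L ^ (T - 1) - ∑ i ∈ Finset.Icc 1 T, astar i * L ^ (T - i) = 0 ∧
      ∑ t ∈ Finset.Icc 1 T, astar t ^ 2 = c ^ 2 * theta L T) := by
  have hL0 : (0:ℝ) ≤ L := by linarith
  have hL0' : (0:ℝ) < L := by linarith
  set S := ∑ i ∈ Finset.range T, L ^ (2 * i) with hSdef
  have hS : 0 < S := Finset.sum_pos (fun j _ => pow_pos hL0' _)
    (Finset.nonempty_range_iff.mpr (by omega))
  have hθ : theta L T = L ^ (2 * (T - 1)) / S := by
    rw [theta, if_neg (by omega)]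
  have hgeom : ∑ i ∈ Finset.Icc 1 T, L ^ (T - i) * L ^ (T - i) = S := by
    rw [aux_sum L hT le_rfl, Nat.sub_self, pow_zero, one_mul]
  have hpow : c ^ 2 * L ^ (2 * (T - 1)) = (c * L ^ (T - 1)) ^ 2 := by
    rw [mul_pow, ← pow_mul, Nat.mul_comm]
  constructor
  · intro a _ _ heq
    have hsum : ∑ i ∈ Finset.Icc 1 T, a i * L ^ (T - i) = c * L ^ (T - 1) := by linarith
    have hCS := Finset.sum_mul_sq_le_sq_mul_sq (Finset.Icc 1 T) a (fun i => L ^ (T - i))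
    have hgeom2 : ∑ i ∈ Finset.Icc 1 T, (L ^ (T - i)) ^ 2 = S := by
      simp only [pow_two]; exact hgeom
    rw [hsum, hgeom2] at hCS
    rw [hθ, ← mul_div_assoc, div_le_iff₀ hS, hpow]
    exact hCS
  · intro astar hdef
    have key : ∀ t : ℕ, 1 ≤ t → t ≤ T →
        ∑ i ∈ Finset.Icc 1 t, astar i * L ^ (t - i)
          = c * L ^ (T - 1) * (L ^ (T - t) * ∑ j ∈ Finset.range t, L ^ (2 * j)) / S := by
      intro t ht1 ht2
      have hterm : ∀ i, astar i * L ^ (t - i)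
          = c * L ^ (T - 1) / S * (L ^ (T - i) * L ^ (t - i)) := fun i => by
        rw [hdef i]; ring
      rw [Finset.sum_congr rfl (fun i _ => hterm i), ← Finset.mul_sum, aux_sum L ht1 ht2]
      ring
    refine ⟨?_, ?_, ?_, ?_⟩
    · intro t _
      rw [hdef t]
      exact div_nonneg (mul_nonneg (mul_nonneg hc (pow_nonneg hL0 _)) (pow_nonneg hL0 _)) hS.le
    · intro t ht
      rw [Finset.mem_Icc] at ht
      obtain ⟨ht1, ht2⟩ := ht
      have ht2' : t ≤ T := by omega
      rw [key t ht1 ht2']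
      have e2 : L ^ (T - t) * L ^ (T - t) * ∑ j ∈ Finset.range t, L ^ (2 * j)
          = ∑ j ∈ Finset.range t, L ^ (2 * (T - t + j)) := by
        rw [Finset.mul_sum]
        apply Finset.sum_congr rfl
        intro j _
        rw [mul_assoc, ← pow_add, ← pow_add]
        congr 1
        ring
      have hmain : L ^ (T - 1) * (L ^ (T - t) * ∑ j ∈ Finset.range t, L ^ (2 * j))
          ≤ L ^ (t - 1) * S := by
        have e1 : L ^ (T - 1) = L ^ (t - 1) * L ^ (T - t) := by
          rw [← pow_add]; congr 1; omega
        calc L ^ (T - 1) * (L ^ (T - t) * ∑ j ∈ Finset.range t, L ^ (2 * j))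
            = L ^ (t - 1) * (L ^ (T - t) * L ^ (T - t) * ∑ j ∈ Finset.range t, L ^ (2 * j)) := by
              rw [e1]; ring
          _ = L ^ (t - 1) * ∑ j ∈ Finset.range t, L ^ (2 * (T - t + j)) := by rw [e2]
          _ ≤ L ^ (t - 1) * S := by
              exact mul_le_mul_of_nonneg_left (aux_le L hL0 ht2') (pow_nonneg hL0 _)
      have hfin : c * L ^ (T - 1) * (L ^ (T - t) * ∑ j ∈ Finset.range t, L ^ (2 * j)) / S
          ≤ c * L ^ (t - 1) := by
        rw [div_le_iff₀ hS]
        calc c * L ^ (T - 1) * (L ^ (T - t) * ∑ j ∈ Finset.range t, L ^ (2 * j))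
            = c * (L ^ (T - 1) * (L ^ (T - t) * ∑ j ∈ Finset.range t, L ^ (2 * j))) := by ring
          _ ≤ c * (L ^ (t - 1) * S) := mul_le_mul_of_nonneg_left hmain hc
          _ = c * L ^ (t - 1) * S := by ring
      linarith
    · rw [key T hT le_rfl, Nat.sub_self, pow_zero, one_mul, mul_div_assoc,
        div_self hS.ne', mul_one, sub_self]
    · have hterm : ∀ i, astar i ^ 2
          = (c * L ^ (T - 1) / S) ^ 2 * (L ^ (T - i) * L ^ (T - i)) := fun i => by
        rw [hdef i]; ring
      rw [Finset.sum_congr rfl (fun i _ => hterm i), ← Finset.mul_sum, hgeom, hθ]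
      have e3 : (c * L ^ (T - 1) / S) ^ 2 * S = (c * L ^ (T - 1)) ^ 2 / S := by
        field_simp
      rw [e3, ← mul_div_assoc, hpow]
end
end
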